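/- Let G = (V,E) be a bi-directed graph and P(G) the set of positive definite V×V matrices Σ with σ_ij = 0 whenever i ≠ j and i,j are not adjacent. For a vertex i with spouse set sp(i) = {j : i↔j}, the map Σ ↦ (λ_i, Σ_{i,sp(i)}, Σ_{-i,-i}) is a bijection from P(G) onto (0,∞) × ℝ^{sp(i)} × P_{-i}(G), where P_{-i}(G) denotes the set of (-i)×(-i) submatrices of matrices in P(G) and λ_i is the Schur complement σ_ii - Σ_{i,-i}(Σ_{-i,-i})^{-1}Σ_{-i,i}. -/

import Mathlib

open Matrix

section aux

open scoped Matrix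

private lemma myPosDef_submatrix_equiv {m n : Type*} [Fintype m] [Fintype n] {M : Matrix n n ℝ}
    (hM : M.PosDef) (e : m ≃ n) : (M.submatrix e e).PosDef := by
  refine PosDef.of_dotProduct_mulVec_pos (hM.1.submatrix e) (fun x hx => ?_)
  have hx' : (x ∘ e.symm) ≠ 0 := fun h => hx (by ext j; simpa using congrFun h (e j))
  have h := hM.dotProduct_mulVec_pos hx'
  convert h using 1
  rw [submatrix_mulVec_equiv]
  simp only [star_trivial, dotProduct, Function.comp_apply]
  exact Fintype.sum_equiv e _ _ (fun j => by simp)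

private lemma myPosDef_of_fromBlocks₂₂ {l m : Type*} [Fintype l] [Fintype m]
    {A : Matrix l l ℝ} {B : Matrix l m ℝ} {C : Matrix m l ℝ} {D : Matrix m m ℝ}
    (h : (fromBlocks A B C D).PosDef) : D.PosDef := by
  refine PosDef.of_dotProduct_mulVec_pos (isHermitian_fromBlocks_iff.mp h.1).2.2.2 (fun x hx => ?_)
  have hz : (Sum.elim (0 : l → ℝ) x) ≠ 0 := fun h0 => hx (funext fun j => congrFun h0 (Sum.inr j))
  have := h.dotProduct_mulVec_pos hz
  simpa [fromBlocks_mulVec, dotProduct, Fintype.sum_sum_type] using this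

private lemma myPosDef_fromBlocks₂₂_iff {l m : Type*} [Fintype l] [DecidableEq l]
    [Fintype m] [DecidableEq m]
    {A : Matrix l l ℝ} {B : Matrix l m ℝ} {D : Matrix m m ℝ} (hD : D.PosDef) :
    (fromBlocks A B Bᴴ D).PosDef ↔ (A - B * D⁻¹ * Bᴴ).PosDef := by
  haveI : Invertible D := D.invertibleOfIsUnitDet (isUnit_iff_ne_zero.mpr hD.det_pos.ne')
  constructor
  · intro h
    refine PosDef.of_dotProduct_mulVec_pos ((IsHermitian.fromBlocks₂₂ A B hD.1).mp h.1) (fun x hx => ?_)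
    have hz : (Sum.elim x (-((D⁻¹ * Bᴴ) *ᵥ x))) ≠ 0 :=
      fun h0 => hx (funext fun j => congrFun h0 (Sum.inl j))
    have hpos := h.dotProduct_mulVec_pos hz
    rw [dotProduct_mulVec] at hpos ⊢
    rw [show Sum.elim x (-((D⁻¹ * Bᴴ) *ᵥ x)) = x ⊕ᵥ (-((D⁻¹ * Bᴴ) *ᵥ x)) from rfl] at hpos
    rw [schur_complement_eq₂₂ A B x _ hD.1] at hpos
    simpa using hpos
  · intro h
    refine PosDef.of_dotProduct_mulVec_pos ((IsHermitian.fromBlocks₂₂ A B hD.1).mpr h.1) (fun z hz => ?_)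
    rw [dotProduct_mulVec, ← Sum.elim_comp_inl_inr z,
      schur_complement_eq₂₂ A B _ _ hD.1]
    have t1 : 0 ≤ (star ((D⁻¹ * Bᴴ) *ᵥ (z ∘ Sum.inl) + z ∘ Sum.inr)) ᵥ* D ⬝ᵥ
        ((D⁻¹ * Bᴴ) *ᵥ (z ∘ Sum.inl) + z ∘ Sum.inr) := by
      rw [← dotProduct_mulVec]; exact hD.posSemidef.dotProduct_mulVec_nonneg _
    by_cases hx : (z ∘ Sum.inl) = 0
    · have hy : (z ∘ Sum.inr) ≠ 0 := by
        intro hy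
        apply hz
        rw [← Sum.elim_comp_inl_inr z, hx, hy]
        ext (j|j) <;> rfl
      have t1' : 0 < (star ((D⁻¹ * Bᴴ) *ᵥ (z ∘ Sum.inl) + z ∘ Sum.inr)) ᵥ* D ⬝ᵥ
          ((D⁻¹ * Bᴴ) *ᵥ (z ∘ Sum.inl) + z ∘ Sum.inr) := by
        rw [← dotProduct_mulVec]
        exact hD.dotProduct_mulVec_pos (by simpa [hx] using hy)
      have t2 : 0 ≤ (star (z ∘ Sum.inl)) ᵥ* (A - B * D⁻¹ * Bᴴ) ⬝ᵥ (z ∘ Sum.inl) := by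
        rw [← dotProduct_mulVec]; exact h.posSemidef.dotProduct_mulVec_nonneg _
      linarith
    · have t2 : 0 < (star (z ∘ Sum.inl)) ᵥ* (A - B * D⁻¹ * Bᴴ) ⬝ᵥ (z ∘ Sum.inl) := by
        rw [← dotProduct_mulVec]; exact h.dotProduct_mulVec_pos hx
      linarith

end aux
open Matrix

private def splitEquiv {p : ℕ} (i : Fin p) : Unit ⊕ {j : Fin p // j ≠ i} ≃ Fin p where
  toFun := Sum.elim (fun _ => i) Subtype.val
  invFun j := if h : j = i then Sum.inl () else Sum.inr ⟨j, h⟩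
  left_inv := by
    rintro (⟨⟩ | ⟨j, hj⟩)
    · simp
    · simp [hj]
  right_inv j := by by_cases h : j = i <;> simp [h]

private lemma splitEquiv_decomp {p : ℕ} (i : Fin p) (Sig : Matrix (Fin p) (Fin p) ℝ) :
    Sig.submatrix (splitEquiv i) (splitEquiv i) =
      fromBlocks (of fun _ _ : Unit => Sig i i)
        (of fun (_ : Unit) (j : {j : Fin p // j ≠ i}) => Sig i (j : Fin p))
        (of fun (j : {j : Fin p // j ≠ i}) (_ : Unit) => Sig (j : Fin p) i)
        (Sig.submatrix (fun j : {j : Fin p // j ≠ i} => (j : Fin p))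
          (fun j : {j : Fin p // j ≠ i} => (j : Fin p))) := by
  ext (⟨⟩ | j) (⟨⟩ | k) <;> simp [splitEquiv, fromBlocks, submatrix_apply]

private lemma unit_posDef_iff {A : Matrix Unit Unit ℝ} : A.PosDef ↔ 0 < A () () := by
  constructor
  · intro h
    have := h.dotProduct_mulVec_pos (x := fun _ => 1) (by intro h0; simpa using congrFun h0 ())
    simpa [dotProduct, mulVec] using this
  · intro h
    refine PosDef.of_dotProduct_mulVec_pos (by ext ⟨⟩ ⟨⟩; simp [conjTranspose_apply]) (fun x hx => ?_)
    have hx0 : x () ≠ 0 := fun h0 => hx (funext fun j => h0)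
    simp only [star_trivial, dotProduct, mulVec, Finset.univ_unique, Finset.sum_singleton]
    have hsq : (0:ℝ) < x () * x () := by
      rcases lt_or_gt_of_ne hx0 with h' | h' <;> nlinarith
    show (0:ℝ) < x () * (A () () * x ())
    nlinarith

private lemma key_posDef_iff {p : ℕ} {i : Fin p} {Sig : Matrix (Fin p) (Fin p) ℝ}
    (hsym : ∀ j k, Sig j k = Sig k j)
    (hM : (Sig.submatrix (fun j : {j : Fin p // j ≠ i} => (j : Fin p))
        (fun j : {j : Fin p // j ≠ i} => (j : Fin p))).PosDef) :
    Sig.PosDef ↔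
      0 < Sig i i -
        (fun j : {j : Fin p // j ≠ i} => Sig i (j : Fin p)) ⬝ᵥ
          ((Sig.submatrix (fun j : {j : Fin p // j ≠ i} => (j : Fin p))
              (fun j : {j : Fin p // j ≠ i} => (j : Fin p)))⁻¹ *ᵥ
            fun j : {j : Fin p // j ≠ i} => Sig (j : Fin p) i) := by
  have hC : (of fun (j : {j : Fin p // j ≠ i}) (_ : Unit) => Sig (j : Fin p) i) =
      (of fun (_ : Unit) (j : {j : Fin p // j ≠ i}) => Sig i (j : Fin p))ᴴ := by
    ext j k
    simp [conjTranspose_apply, hsym]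
  have h1 : Sig.PosDef ↔ (Sig.submatrix (splitEquiv i) (splitEquiv i)).PosDef := by
    constructor
    · exact fun h => myPosDef_submatrix_equiv h _
    · intro h
      have := myPosDef_submatrix_equiv h (splitEquiv i).symm
      simpa [submatrix_submatrix, Equiv.self_comp_symm] using this
  rw [h1, splitEquiv_decomp, hC, myPosDef_fromBlocks₂₂_iff hM, unit_posDef_iff]
  have hentry : ((of fun _ _ : Unit => Sig i i) -
      (of fun (_ : Unit) (j : {j : Fin p // j ≠ i}) => Sig i (j : Fin p)) *
        (Sig.submatrix (fun j : {j : Fin p // j ≠ i} => (j : Fin p))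
            (fun j : {j : Fin p // j ≠ i} => (j : Fin p)))⁻¹ *
        (of fun (_ : Unit) (j : {j : Fin p // j ≠ i}) => Sig i (j : Fin p))ᴴ) () () =
      Sig i i -
        (fun j : {j : Fin p // j ≠ i} => Sig i (j : Fin p)) ⬝ᵥ
          ((Sig.submatrix (fun j : {j : Fin p // j ≠ i} => (j : Fin p))
              (fun j : {j : Fin p // j ≠ i} => (j : Fin p)))⁻¹ *ᵥ
            fun j : {j : Fin p // j ≠ i} => Sig (j : Fin p) i) := by
    simp only [Matrix.sub_apply, of_apply, Matrix.mul_apply, conjTranspose_apply, star_trivial,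
      dotProduct, mulVec, Finset.sum_mul, Finset.mul_sum]
    congr 1
    rw [Finset.sum_comm]
    apply Finset.sum_congr rfl
    intro j _
    apply Finset.sum_congr rfl
    intro k _
    rw [hsym i k]
    ring
  rw [hentry]

/-- for a bi-directed graph `G`, the map
`Σ ↦ (λ_i, Σ_{i,sp(i)}, Σ_{-i,-i})` is a bijection from `P(G)` onto
`(0,∞) × ℝ^{sp(i)} × P_{-i}(G)`. -/
theorem covGraph_schur_param_bijOn {p : ℕ} (G : SimpleGraph (Fin p))
    [DecidableRel G.Adj] (i : Fin p) :
    Set.BijOn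
      (fun Sig : Matrix (Fin p) (Fin p) ℝ =>
        (Sig i i -
            (fun j : {j : Fin p // j ≠ i} => Sig i (j : Fin p)) ⬝ᵥ
              ((Sig.submatrix (fun j : {j : Fin p // j ≠ i} => (j : Fin p))
                  (fun j : {j : Fin p // j ≠ i} => (j : Fin p)))⁻¹ *ᵥ
                fun j : {j : Fin p // j ≠ i} => Sig (j : Fin p) i),
          fun j : {j : Fin p // G.Adj i j} => Sig i (j : Fin p),
          Sig.submatrix (fun j : {j : Fin p // j ≠ i} => (j : Fin p))
            (fun j : {j : Fin p // j ≠ i} => (j : Fin p))))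
      {Sig : Matrix (Fin p) (Fin p) ℝ |
        Sig.PosDef ∧ ∀ j k : Fin p, j ≠ k → ¬ G.Adj j k → Sig j k = 0}
      {t : ℝ × ({j : Fin p // G.Adj i j} → ℝ) ×
          Matrix {j : Fin p // j ≠ i} {j : Fin p // j ≠ i} ℝ |
        0 < t.1 ∧
          t.2.2 ∈ (fun Sig : Matrix (Fin p) (Fin p) ℝ =>
              Sig.submatrix (fun j : {j : Fin p // j ≠ i} => (j : Fin p))
                (fun j : {j : Fin p // j ≠ i} => (j : Fin p))) ''
            {Sig : Matrix (Fin p) (Fin p) ℝ |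
              Sig.PosDef ∧ ∀ j k : Fin p, j ≠ k → ¬ G.Adj j k → Sig j k = 0}} := by
  refine ⟨?_, ?_, ?_⟩
  -- MapsTo
  · rintro Sig ⟨hPD, hpat⟩
    have hsym : ∀ j k, Sig j k = Sig k j := fun j k => by
      have := hPD.1.apply j k
      simpa using this.symm
    have hMPD : (Sig.submatrix (fun j : {j : Fin p // j ≠ i} => (j : Fin p))
        (fun j : {j : Fin p // j ≠ i} => (j : Fin p))).PosDef := by
      have h2 := myPosDef_submatrix_equiv hPD (splitEquiv i)
      rw [splitEquiv_decomp] at h2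
      exact myPosDef_of_fromBlocks₂₂ h2
    exact ⟨(key_posDef_iff hsym hMPD).mp hPD, ⟨Sig, ⟨hPD, hpat⟩, rfl⟩⟩
  -- InjOn
  · rintro Sig ⟨hPD, hpat⟩ Sig' ⟨hPD', hpat'⟩ heq
    simp only [Prod.mk.injEq] at heq
    obtain ⟨hlam, hrow, hsub⟩ := heq
    have hsym : ∀ j k, Sig j k = Sig k j := fun j k => by
      have := hPD.1.apply j k; simpa using this.symm
    have hsym' : ∀ j k, Sig' j k = Sig' k j := fun j k => by
      have := hPD'.1.apply j k; simpa using this.symm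
    have hb : (fun j : {j : Fin p // j ≠ i} => Sig i (j : Fin p)) =
        fun j : {j : Fin p // j ≠ i} => Sig' i (j : Fin p) := by
      funext j
      by_cases h : G.Adj i (j : Fin p)
      · exact congrFun hrow ⟨(j : Fin p), h⟩
      · rw [hpat i j (Ne.symm j.2) h, hpat' i j (Ne.symm j.2) h]
    have hc : (fun j : {j : Fin p // j ≠ i} => Sig (j : Fin p) i) =
        fun j : {j : Fin p // j ≠ i} => Sig' (j : Fin p) i := by
      funext j
      rw [hsym, hsym']
      exact congrFun hb j
    rw [hb, hc, hsub] at hlam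
    have hii : Sig i i = Sig' i i := by linarith
    ext j k
    by_cases hj : j = i <;> by_cases hk : k = i
    · subst hj; subst hk; exact hii
    · subst hj; exact congrFun hb ⟨k, hk⟩
    · subst hk; rw [hsym, hsym']; exact congrFun hb ⟨j, hj⟩
    · exact congrFun (congrFun hsub ⟨j, hj⟩) ⟨k, hk⟩
  -- SurjOn
  · rintro ⟨t, v, M⟩ ⟨ht, N, ⟨hNPD, hNpat⟩, rfl⟩
    have hsymN : ∀ j k, N j k = N k j := fun j k => by
      have := hNPD.1.apply j k; simpa using this.symm
    set M := N.submatrix (fun j : {j : Fin p // j ≠ i} => (j : Fin p))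
        (fun j : {j : Fin p // j ≠ i} => (j : Fin p)) with hMdef
    set b : {j : Fin p // j ≠ i} → ℝ :=
      fun j => if h : G.Adj i (j : Fin p) then v ⟨(j : Fin p), h⟩ else 0 with hbdef
    set Sig : Matrix (Fin p) (Fin p) ℝ := Matrix.of fun j k =>
      if hj : j = i then (if hk : k = i then t + b ⬝ᵥ (M⁻¹ *ᵥ b) else b ⟨k, hk⟩)
      else if hk : k = i then b ⟨j, hj⟩ else N j k with hSigdef
    have hSigii : Sig i i = t + b ⬝ᵥ (M⁻¹ *ᵥ b) := by simp [hSigdef]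
    have hSigrow : ∀ j : {j : Fin p // j ≠ i}, Sig i (j : Fin p) = b j := fun j => by
      simp [hSigdef, j.prop]
    have hSigcol : ∀ j : {j : Fin p // j ≠ i}, Sig (j : Fin p) i = b j := fun j => by
      simp [hSigdef, j.prop]
    have hsub : Sig.submatrix (fun j : {j : Fin p // j ≠ i} => (j : Fin p))
        (fun j : {j : Fin p // j ≠ i} => (j : Fin p)) = M := by
      ext j k
      simp [hSigdef, hMdef, j.prop, k.prop]
    have hsymSig : ∀ j k, Sig j k = Sig k j := by
      intro j k
      by_cases hj : j = i <;> by_cases hk : k = i <;>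
        simp [hSigdef, hj, hk, hsymN j k]
    have hMPD : M.PosDef := by
      have h2 := myPosDef_submatrix_equiv hNPD (splitEquiv i)
      rw [splitEquiv_decomp] at h2
      exact myPosDef_of_fromBlocks₂₂ h2
    have hval : Sig i i -
        (fun j : {j : Fin p // j ≠ i} => Sig i (j : Fin p)) ⬝ᵥ
          ((Sig.submatrix (fun j : {j : Fin p // j ≠ i} => (j : Fin p))
              (fun j : {j : Fin p // j ≠ i} => (j : Fin p)))⁻¹ *ᵥ
            fun j : {j : Fin p // j ≠ i} => Sig (j : Fin p) i) = t := by
      have e1 : (fun j : {j : Fin p // j ≠ i} => Sig i (j : Fin p)) = b :=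
        funext hSigrow
      have e2 : (fun j : {j : Fin p // j ≠ i} => Sig (j : Fin p) i) = b :=
        funext hSigcol
      rw [hSigii, e1, e2, hsub]
      ring
    have hpatSig : ∀ j k : Fin p, j ≠ k → ¬ G.Adj j k → Sig j k = 0 := by
      intro j k hjk hadj
      by_cases hj : j = i <;> by_cases hk : k = i
      · exact absurd (hj.trans hk.symm) hjk
      · subst hj
        simp only [hSigdef, Matrix.of_apply, dif_pos rfl, dif_neg hk]
        rw [hbdef]
        exact dif_neg hadj
      · subst hk
        simp only [hSigdef, Matrix.of_apply, dif_neg hj, dif_pos rfl]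
        rw [hbdef]
        exact dif_neg fun h => hadj (G.adj_symm h)
      · simp only [hSigdef, Matrix.of_apply, dif_neg hj, dif_neg hk]
        exact hNpat j k hjk hadj
    have hSigPD : Sig.PosDef := by
      rw [key_posDef_iff hsymSig (hsub ▸ hMPD), hval]
      exact ht
    refine ⟨Sig, ⟨hSigPD, hpatSig⟩, ?_⟩
    refine Prod.ext hval (Prod.ext ?_ hsub)
    funext j
    have hne : (j : Fin p) ≠ i := fun h => by
      have := j.prop; rw [h] at this; exact G.irrefl this
    show Sig i (j : Fin p) = v j
    rw [hSigrow ⟨(j : Fin p), hne⟩, hbdef]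
    simp only [dif_pos j.prop]
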